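/- The quantity 2π / arccos(1/3) is not a natural number (i.e., there is no positive integer m with m · arccos(1/3) = 2π). -/

import Mathlib

open Real

lemma arccos_third_gt : Real.pi / 3 < Real.arccos (1/3) := by
  have h1 : Real.cos (Real.arccos (1/3)) = 1/3 :=
    Real.cos_arccos (by norm_num) (by norm_num)
  have hmem1 : Real.pi / 3 ∈ Set.Icc 0 Real.pi :=
    ⟨by positivity, by linarith [Real.pi_pos]⟩
  have hmem2 : Real.arccos (1/3) ∈ Set.Icc 0 Real.pi :=
    ⟨Real.arccos_nonneg _, Real.arccos_le_pi _⟩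
  have : Real.cos (Real.arccos (1/3)) < Real.cos (Real.pi / 3) := by
    rw [h1, Real.cos_pi_div_three]; norm_num
  exact (Real.strictAntiOn_cos.lt_iff_gt hmem2 hmem1).mp this

lemma arccos_third_lt : Real.arccos (1/3) < 2 * Real.pi / 5 := by
  have hcos : Real.cos (2 * Real.pi / 5) = (Real.sqrt 5 - 1) / 4 := by
    have h2 : 2 * Real.pi / 5 = 2 * (Real.pi / 5) := by ring
    rw [h2, Real.cos_two_mul, Real.cos_pi_div_five]
    have h5 : Real.sqrt 5 ^ 2 = 5 := Real.sq_sqrt (by norm_num)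
    nlinarith [h5]
  have hs : Real.sqrt 5 < 7/3 := by
    rw [show (7:ℝ)/3 = Real.sqrt ((7/3)^2) by rw [Real.sqrt_sq]; norm_num]
    exact Real.sqrt_lt_sqrt (by norm_num) (by norm_num)
  have hlt : Real.cos (2 * Real.pi / 5) < 1/3 := by rw [hcos]; linarith
  have hmem1 : 2 * Real.pi / 5 ∈ Set.Icc 0 Real.pi :=
    ⟨by positivity, by linarith [Real.pi_pos]⟩
  have hmem2 : Real.arccos (1/3) ∈ Set.Icc 0 Real.pi :=
    ⟨Real.arccos_nonneg _, Real.arccos_le_pi _⟩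
  have h1 : Real.cos (Real.arccos (1/3)) = 1/3 :=
    Real.cos_arccos (by norm_num) (by norm_num)
  exact (Real.strictAntiOn_cos.lt_iff_gt hmem1 hmem2).mp (by rw [h1]; exact hlt)

theorem stmt_0 : ¬ ∃ m : ℕ, 0 < m ∧ (m : ℝ) * Real.arccos (1/3) = 2 * Real.pi := by
  rintro ⟨m, hm, heq⟩
  have h1 := arccos_third_gt
  have h2 := arccos_third_lt
  have hpos := Real.pi_pos
  rcases le_or_gt m 5 with h | h
  · have : (m : ℝ) ≤ 5 := by exact_mod_cast h
    nlinarith [Real.arccos_nonneg (1/3 : ℝ)]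
  · have : (6 : ℝ) ≤ m := by exact_mod_cast h
    nlinarith
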